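/- Let P > 0, N₀ > 0, η ∈ (0,1], β ∈ (0,1). (i) For all x > 0 and y > 0, the inequality ηβ(1−β)Pxy/(N₀(ηβy + (1−β))) > (1−β)Px/((1−β)Py + N₀) holds if and only if y > √(N₀/(ηβP)). (ii) Consequently, if X and W are independent exponential random variables with means λ_SR > 0 and λ_RD > 0, then ℙ( ηβ(1−β)P·X·W/(N₀(ηβW + (1−β))) > (1−β)P·X/((1−β)P·W + N₀) ) = exp( −√(N₀/(ηβP)) / λ_RD ). -/

import Mathlib

open MeasureTheory ProbabilityTheory Real

lemma expMeasure_Iic_eq' {r : ℝ} (hr : 0 < r) (x : ℝ) :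
    expMeasure r (Set.Iic x) = ENNReal.ofReal (if 0 ≤ x then 1 - Real.exp (-(r * x)) else 0) := by
  rw [expMeasure, gammaMeasure, withDensity_apply _ measurableSet_Iic]
  exact lintegral_exponentialPDF_eq_antiDeriv hr x

lemma expMeasure_Ioi_toReal' {r : ℝ} (hr : 0 < r) {s : ℝ} (hs : 0 ≤ s) :
    (expMeasure r (Set.Ioi s)).toReal = Real.exp (-(r * s)) := by
  have : IsProbabilityMeasure (expMeasure r) := isProbabilityMeasure_expMeasure hr
  have h1 : expMeasure r (Set.Ioi s) = 1 - expMeasure r (Set.Iic s) := by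
    rw [← Set.compl_Iic]
    exact prob_compl_eq_one_sub measurableSet_Iic
  rw [h1, expMeasure_Iic_eq' hr, if_pos hs]
  have he : Real.exp (-(r * s)) ≤ 1 := Real.exp_le_one_iff.2 (by nlinarith)
  have hle : ENNReal.ofReal (1 - Real.exp (-(r * s))) ≤ 1 :=
    ENNReal.ofReal_le_one.2 (by linarith [Real.exp_pos (-(r * s))])
  rw [ENNReal.toReal_sub_of_le hle ENNReal.one_ne_top, ENNReal.toReal_one,
    ENNReal.toReal_ofReal (by linarith)]
  ring

/-- **Probability of positive secrecy rate, PS policy, high-SNR approximation.**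
(i) For `x, y > 0`, the high-SNR `γ_D > γ_R` iff `y > √(N₀/(ηβP))`; (ii) consequently
`ℙ(γ_D > γ_R) = exp(-√(N₀/(ηβP))/λ_RD)`. -/
theorem prob_positive_secrecy_PS_highSNR
    {Ω : Type*} [MeasurableSpace Ω] (μ : Measure Ω) [IsProbabilityMeasure μ]
    (X W : Ω → ℝ) (hXm : Measurable X) (hWm : Measurable W)
    (hindep : IndepFun X W μ)
    (lamSR lamRD : ℝ) (hlamSR : 0 < lamSR) (hlamRD : 0 < lamRD)
    (hX : Measure.map X μ = expMeasure lamSR⁻¹)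
    (hW : Measure.map W μ = expMeasure lamRD⁻¹)
    (P N0 η β : ℝ) (hP : 0 < P) (hN0 : 0 < N0)
    (hη0 : 0 < η) (hη1 : η ≤ 1) (hβ0 : 0 < β) (hβ1 : β < 1) :
    (∀ x y : ℝ, 0 < x → 0 < y →
      (η * β * (1 - β) * P * x * y / (N0 * (η * β * y + (1 - β))) >
        (1 - β) * P * x / ((1 - β) * P * y + N0) ↔ y > Real.sqrt (N0 / (η * β * P)))) ∧
    (μ {ω | η * β * (1 - β) * P * X ω * W ω / (N0 * (η * β * W ω + (1 - β))) >
        (1 - β) * P * X ω / ((1 - β) * P * W ω + N0)}).toReal =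
      Real.exp (-Real.sqrt (N0 / (η * β * P)) / lamRD) := by
  have h1b : 0 < 1 - β := by linarith
  have hiff : ∀ x y : ℝ, 0 < x → 0 < y →
      (η * β * (1 - β) * P * x * y / (N0 * (η * β * y + (1 - β))) >
        (1 - β) * P * x / ((1 - β) * P * y + N0) ↔ y > Real.sqrt (N0 / (η * β * P))) := by
    intro x y hx hy
    have hd1 : 0 < N0 * (η * β * y + (1 - β)) := by positivity
    have hd2 : 0 < (1 - β) * P * y + N0 := by positivity
    have hηβP : 0 < η * β * P := by positivity
    have hk : 0 < (1 - β) ^ 2 * P * x := by positivity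
    have key : η * β * (1 - β) * P * x * y * ((1 - β) * P * y + N0)
        - (1 - β) * P * x * (N0 * (η * β * y + (1 - β)))
        = (1 - β) ^ 2 * P * x * (η * β * P * y ^ 2 - N0) := by ring
    rw [gt_iff_lt, div_lt_div_iff₀ hd2 hd1, gt_iff_lt, Real.sqrt_lt' hy, div_lt_iff₀ hηβP]
    constructor <;> intro h <;> nlinarith [key, hk]
  refine ⟨hiff, ?_⟩
  set s : ℝ := Real.sqrt (N0 / (η * β * P)) with hs
  have hs0 : 0 < s := Real.sqrt_pos.2 (by positivity)
  -- a.e. positivity of X and W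
  have haeX : ∀ᵐ ω ∂μ, 0 < X ω := by
    rw [ae_iff]
    simp only [not_lt]
    have : {ω | X ω ≤ 0} = X ⁻¹' Set.Iic 0 := rfl
    rw [this, ← Measure.map_apply hXm measurableSet_Iic, hX,
      expMeasure_Iic_eq' (by positivity), if_pos le_rfl]
    simp
  have haeW : ∀ᵐ ω ∂μ, 0 < W ω := by
    rw [ae_iff]
    simp only [not_lt]
    have : {ω | W ω ≤ 0} = W ⁻¹' Set.Iic 0 := rfl
    rw [this, ← Measure.map_apply hWm measurableSet_Iic, hW,
      expMeasure_Iic_eq' (by positivity), if_pos le_rfl]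
    simp
  -- the event coincides a.e. with {s < W}
  have haeeq : {ω | η * β * (1 - β) * P * X ω * W ω / (N0 * (η * β * W ω + (1 - β))) >
      (1 - β) * P * X ω / ((1 - β) * P * W ω + N0)} =ᵐ[μ] {ω | s < W ω} := by
    rw [Filter.eventuallyEq_set]
    filter_upwards [haeX, haeW] with ω hx hw
    simpa using hiff (X ω) (W ω) hx hw
  rw [measure_congr haeeq]
  have : {ω | s < W ω} = W ⁻¹' Set.Ioi s := rfl
  rw [this, ← Measure.map_apply hWm measurableSet_Ioi, hW,
    expMeasure_Ioi_toReal' (by positivity) hs0.le]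
  congr 1
  field_simp
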